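/- If G is a 2-connected non-bipartite graph, then for every pair of distinct vertices u, v of G there exist both an odd u-v path and an even u-v path in G. -/

import Mathlib

open SimpleGraph

variable {V : Type*}

/-- A graph is 2-connected: connected, at least 3 vertices, and deleting any
vertex keeps it connected. -/
def TwoConnected (G : SimpleGraph V) : Prop :=
  G.Connected ∧ 3 ≤ Nat.card V ∧
    ∀ v : V, ((⊤ : G.Subgraph).deleteVerts {v}).coe.Connected

/-- A graph is non-bipartite iff it has an odd circuit. -/
def HasOddCircuit (G : SimpleGraph V) : Prop :=
  ∃ (u : V) (c : G.Walk u u), c.IsCycle ∧ Odd c.length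

/-- `G` contains a totally odd subdivision of `C3+` (triangle with a doubled
edge): equivalently, the union of an odd circuit and an odd path having exactly
its two distinct endpoints on the circuit. -/
def ContainsOddC3Plus (G : SimpleGraph V) : Prop :=
  ∃ (x : V) (c : G.Walk x x) (a b : V) (p : G.Walk a b),
    c.IsCycle ∧ Odd c.length ∧ p.IsPath ∧ Odd p.length ∧ a ≠ b ∧
    a ∈ c.support ∧ b ∈ c.support ∧
    ∀ w ∈ p.support, w ∈ c.support → w = a ∨ w = b

section Space
variable [Fintype V] [DecidableEq V]

/-- `C` is the edge set of a circuit of `G`. -/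
def IsCircuitSet (G : SimpleGraph V) (C : Finset (Sym2 V)) : Prop :=
  ∃ (u : V) (c : G.Walk u u), c.IsCycle ∧ C = c.edges.toFinset

/-- incidence vector over `𝔽₂` of a set of edges -/
def edgeInd (C : Finset (Sym2 V)) : Sym2 V → ZMod 2 :=
  fun e => if e ∈ C then 1 else 0

/-- the cycle space of `G`: the `𝔽₂`-span of incidence vectors of circuits -/
def cycleSpace (G : SimpleGraph V) : Submodule (ZMod 2) (Sym2 V → ZMod 2) :=
  Submodule.span (ZMod 2) {x | ∃ C, IsCircuitSet G C ∧ x = edgeInd C}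

/-- `C` is a cycle of `G` (an element of the cycle space). -/
def IsCycleSet (G : SimpleGraph V) (C : Finset (Sym2 V)) : Prop :=
  edgeInd C ∈ cycleSpace G

/-- `B` is a cycle basis of `G`: a family of cycles whose incidence vectors
form a basis of the cycle space. -/
def IsCycleBasis (G : SimpleGraph V) (B : Finset (Finset (Sym2 V))) : Prop :=
  (∀ C ∈ B, IsCycleSet G C) ∧
  LinearIndependent (ZMod 2) (fun C : B => edgeInd C.1) ∧
  Submodule.span (ZMod 2) (edgeInd '' (B : Set (Finset (Sym2 V)))) = cycleSpace G

end Space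

/-- data of a potential ear: two endpoints and a walk between them -/
abbrev EarData (G : SimpleGraph V) := Σ a : V, Σ b : V, G.Walk a b

/-- the union of a base circuit and a list of ears, as a subgraph -/
def earsUnion {G : SimpleGraph V} {x : V} (base : G.Walk x x)
    (ears : List (EarData G)) : G.Subgraph :=
  ears.foldl (fun H e => H ⊔ e.2.2.toSubgraph) base.toSubgraph

/-- `e` is an ear of the subgraph `H`: a path with exactly its two distinct
endpoints in `H`, all edges new. -/
def IsEar {G : SimpleGraph V} (H : G.Subgraph) (e : EarData G) : Prop :=
  e.2.2.IsPath ∧ e.1 ≠ e.2.1 ∧ e.1 ∈ H.verts ∧ e.2.1 ∈ H.verts ∧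
  (∀ v ∈ e.2.2.support, v ≠ e.1 → v ≠ e.2.1 → v ∉ H.verts) ∧
  ∀ ed ∈ e.2.2.edges, ed ∉ H.edgeSet

/-- an (open) ear-decomposition of `G` -/
structure EarDecomposition (G : SimpleGraph V) where
  x : V
  base : G.Walk x x
  base_cycle : base.IsCycle
  ears : List (EarData G)
  ear_cond : ∀ i (h : i < ears.length),
    IsEar (earsUnion base (ears.take i)) (ears.get ⟨i, h⟩)
  union_top : earsUnion base ears = ⊤

/-- an ear-decomposition is odd if the base circuit and all ears are odd -/
def EarDecomposition.IsOdd {G : SimpleGraph V} (ed : EarDecomposition G) : Prop :=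
  Odd ed.base.length ∧ ∀ e ∈ ed.ears, Odd e.2.2.length

/-- `G` is a totally odd subdivision of `K₄`. -/
def IsTotallyOddK4 (G : SimpleGraph V) : Prop :=
  ∃ (b : Fin 4 → V) (p : ∀ i j : Fin 4, i < j → G.Walk (b i) (b j)),
    Function.Injective b ∧
    (∀ i j h, (p i j h).IsPath ∧ Odd (p i j h).length) ∧
    (∀ i j h i' j' h', (i, j) ≠ (i', j') →
      ∀ v ∈ (p i j h).support, v ∈ (p i' j' h').support →
        (v = b i ∨ v = b j) ∧ (v = b i' ∨ v = b j')) ∧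
    (⨆ i, ⨆ j, ⨆ h : i < j, (p i j h).toSubgraph) = ⊤

/-- `G` contains a totally odd subdivision of `K₄` as a subgraph. -/
def ContainsTotallyOddK4 (G : SimpleGraph V) : Prop :=
  ∃ (b : Fin 4 → V) (p : ∀ i j : Fin 4, i < j → G.Walk (b i) (b j)),
    Function.Injective b ∧
    (∀ i j h, (p i j h).IsPath ∧ Odd (p i j h).length) ∧
    (∀ i j h i' j' h', (i, j) ≠ (i', j') →
      ∀ v ∈ (p i j h).support, v ∈ (p i' j' h').support →
        (v = b i ∨ v = b j) ∧ (v = b i' ∨ v = b j'))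

/-- `G` contains an odd theta subgraph through the vertex `w`: three pairwise
internally disjoint and edge-disjoint odd paths with the same distinct ends,
one of them passing through `w`. -/
def ContainsOddThetaThrough (G : SimpleGraph V) (w : V) : Prop :=
  ∃ (x y : V) (p1 p2 p3 : G.Walk x y), x ≠ y ∧
    p1.IsPath ∧ p2.IsPath ∧ p3.IsPath ∧
    Odd p1.length ∧ Odd p2.length ∧ Odd p3.length ∧
    (∀ v ∈ p1.support, v ∈ p2.support → v = x ∨ v = y) ∧
    (∀ v ∈ p1.support, v ∈ p3.support → v = x ∨ v = y) ∧
    (∀ v ∈ p2.support, v ∈ p3.support → v = x ∨ v = y) ∧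
    (∀ e ∈ p1.edges, e ∉ p2.edges) ∧
    (∀ e ∈ p1.edges, e ∉ p3.edges) ∧
    (∀ e ∈ p2.edges, e ∉ p3.edges) ∧
    (w ∈ p1.support ∨ w ∈ p2.support ∨ w ∈ p3.support)

/-- a graph is factor-critical if deleting any vertex leaves a graph with a
perfect matching -/
def FactorCritical {W : Type*} (H : SimpleGraph W) : Prop :=
  ∀ v : W, ∃ M : ((⊤ : H.Subgraph).deleteVerts {v}).coe.Subgraph,
    M.IsPerfectMatching


section Stmt12Aux

variable {G : SimpleGraph V}

/-- Both-parity path pair between `u` and `v`, confined to vertex set `S`. -/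
def GoodPair (G : SimpleGraph V) (S : Set V) (u v : V) : Prop :=
  ∃ p q : G.Walk u v, p.IsPath ∧ q.IsPath ∧ Odd (p.length + q.length) ∧
    (∀ x ∈ p.support, x ∈ S) ∧ (∀ x ∈ q.support, x ∈ S)

def GoodSet (G : SimpleGraph V) (S : Set V) : Prop :=
  ∀ u v, u ∈ S → v ∈ S → u ≠ v → GoodPair G S u v

lemma GoodPair.mono {S T : Set V} (hST : S ⊆ T) {u v : V} (h : GoodPair G S u v) :
    GoodPair G T u v := by
  obtain ⟨p, q, hp, hq, hl, hps, hqs⟩ := h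
  exact ⟨p, q, hp, hq, hl, fun x hx => hST (hps x hx), fun x hx => hST (hqs x hx)⟩

lemma GoodPair.symm {S : Set V} {u v : V} (h : GoodPair G S u v) : GoodPair G S v u := by
  obtain ⟨p, q, hp, hq, hl, hps, hqs⟩ := h
  refine ⟨p.reverse, q.reverse, hp.reverse, hq.reverse, by simpa using hl, ?_, ?_⟩ <;>
    intro x hx <;> rw [Walk.support_reverse, List.mem_reverse] at hx
  exacts [hps x hx, hqs x hx]

lemma SimpleGraph.Walk.IsPath.append' {u v w : V} {p : G.Walk u v} {q : G.Walk v w}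
    (hp : p.IsPath) (hq : q.IsPath) (h : ∀ x ∈ p.support, x ∈ q.support → x = v) :
    (p.append q).IsPath := by
  rw [Walk.isPath_def, Walk.support_append]
  refine List.Nodup.append hp.support_nodup hq.support_nodup.tail ?_
  intro x hx1 hx2
  have hxq : x ∈ q.support := List.mem_of_mem_tail hx2
  have hxv : x = v := h x hx1 hxq
  subst hxv
  have hnd := hq.support_nodup
  rw [Walk.support_eq_cons] at hnd
  exact (List.nodup_cons.mp hnd).1 hx2

lemma eq_of_mem_take_drop [DecidableEq V] {a b u : V} {p : G.Walk a b} (hp : p.IsPath)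
    (hu : u ∈ p.support) {x : V} (hx1 : x ∈ (p.takeUntil u hu).support)
    (hx2 : x ∈ (p.dropUntil u hu).support) : x = u := by
  by_contra hne
  have hnd := hp.support_nodup
  rw [← Walk.take_spec p hu, Walk.support_append] at hnd
  have hx2' : x ∈ (p.dropUntil u hu).support.tail := by
    have hcons := Walk.support_eq_cons (p.dropUntil u hu)
    rw [hcons] at hx2
    rcases List.mem_cons.mp hx2 with h | h
    · exact absurd h hne
    · exact h
  rw [List.nodup_append] at hnd
  exact hnd.2.2 x hx1 x hx2' rfl

lemma end_not_mem_takeUntil [DecidableEq V] {a b u : V} {p : G.Walk a b} (hp : p.IsPath)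
    (hu : u ∈ p.support) (hub : u ≠ b) : b ∉ (p.takeUntil u hu).support :=
  fun h => hub (eq_of_mem_take_drop hp hu h (Walk.end_mem_support _)).symm

lemma start_not_mem_dropUntil [DecidableEq V] {a b u : V} {p : G.Walk a b} (hp : p.IsPath)
    (hu : u ∈ p.support) (hua : u ≠ a) : a ∉ (p.dropUntil u hu).support :=
  fun h => hua (eq_of_mem_take_drop hp hu (Walk.start_mem_support _) h).symm

lemma goodPair_glue {S : Set V} {u c v : V} (pre : G.Walk u c) (hpre : pre.IsPath)
    (hd : ∀ x ∈ pre.support, x ∈ S → x = c) (h : GoodPair G S c v) :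
    GoodPair G (S ∪ {x | x ∈ pre.support}) u v := by
  obtain ⟨p, q, hp, hq, hl, hps, hqs⟩ := h
  refine ⟨pre.append p, pre.append q,
    hpre.append' hp (fun x hx hxp => hd x hx (hps x hxp)),
    hpre.append' hq (fun x hx hxq => hd x hx (hqs x hxq)), ?_, ?_, ?_⟩
  · rw [Walk.length_append, Walk.length_append, Nat.odd_iff] at *
    omega
  · intro x hx
    rw [Walk.mem_support_append_iff] at hx
    rcases hx with h | h
    exacts [Or.inr h, Or.inl (hps x h)]
  · intro x hx
    rw [Walk.mem_support_append_iff] at hx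
    rcases hx with h | h
    exacts [Or.inr h, Or.inl (hqs x h)]

lemma goodPair_glue' {S : Set V} {u c v : V} (post : G.Walk c v) (hpost : post.IsPath)
    (hd : ∀ x ∈ post.support, x ∈ S → x = c) (h : GoodPair G S u c) :
    GoodPair G (S ∪ {x | x ∈ post.support}) u v := by
  have hd' : ∀ x ∈ post.reverse.support, x ∈ S → x = c := by
    intro x hx
    rw [Walk.support_reverse, List.mem_reverse] at hx
    exact hd x hx
  have hres := (goodPair_glue post.reverse hpost.reverse hd' h.symm).symm
  have hset : {x | x ∈ post.reverse.support} = {x | x ∈ post.support} := by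
    ext x; simp [Walk.support_reverse]
  rwa [hset] at hres

lemma exists_firstHit {S : Set V} : ∀ {v h : V} (w : G.Walk v h), h ∈ S →
    ∃ (b : V) (q : G.Walk v b), b ∈ S ∧ (∀ x ∈ q.support, x ∈ S → x = b) ∧
      (∀ x ∈ q.support, x ∈ w.support) := by
  intro v h w
  induction w with
  | nil => exact fun hh => ⟨_, Walk.nil, hh, by simp, by simp⟩
  | cons hadj rest ih =>
    intro hh
    rename_i a c d
    by_cases haS : a ∈ S
    · exact ⟨a, Walk.nil, haS, by simp +contextual, by simp⟩
    · obtain ⟨b, q, hb, hq1, hq2⟩ := ih hh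
      refine ⟨b, Walk.cons hadj q, hb, ?_, ?_⟩
      · intro x hx hxS
        rw [Walk.support_cons, List.mem_cons] at hx
        rcases hx with rfl | hx
        · exact absurd hxS haS
        · exact hq1 x hx hxS
      · intro x hx
        rw [Walk.support_cons, List.mem_cons] at hx
        rw [Walk.support_cons, List.mem_cons]
        rcases hx with rfl | hx
        exacts [Or.inl rfl, Or.inr (hq2 x hx)]

lemma mem_support_tail_of_closed {w x : V} {c : G.Walk w w} (hc : c ≠ Walk.nil)
    (hx : x ∈ c.support) : x ∈ c.support.tail := by
  cases c with
  | nil => exact absurd rfl hc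
  | cons hadj rest =>
    rw [Walk.support_cons] at hx ⊢
    rw [List.tail_cons]
    rcases List.mem_cons.mp hx with rfl | h
    · exact rest.end_mem_support
    · exact h

lemma length_rotate' [DecidableEq V] {w u : V} (c : G.Walk w w) (h : u ∈ c.support) :
    (c.rotate u h).length = c.length := by
  rw [Walk.rotate, Walk.length_append, Nat.add_comm, ← Walk.length_append, Walk.take_spec]

lemma goodPair_of_cycle [DecidableEq V] {u : V} {c : G.Walk u u} (hc : c.IsCycle)
    (hodd : Odd c.length) {v : V} (hv : v ∈ c.support) (hne : v ≠ u) :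
    GoodPair G {x | x ∈ c.support} u v := by
  cases c with
  | nil => simp only [Walk.support_nil, List.mem_singleton] at hv; exact absurd hv hne
  | cons hadj rest =>
    have hrest : rest.IsPath := ((Walk.cons_isCycle_iff rest hadj).mp hc).1
    have hvrest : v ∈ rest.support := by
      rw [Walk.support_cons] at hv
      rcases List.mem_cons.mp hv with rfl | h
      · exact absurd rfl hne
      · exact h
    have hlensum : (rest.takeUntil v hvrest).length + (rest.dropUntil v hvrest).length
        = rest.length := by
      rw [← Walk.length_append, Walk.take_spec]
    refine ⟨Walk.cons hadj (rest.takeUntil v hvrest), (rest.dropUntil v hvrest).reverse,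
      ?_, (hrest.dropUntil hvrest).reverse, ?_, ?_, ?_⟩
    · rw [Walk.cons_isPath_iff]
      exact ⟨hrest.takeUntil _, end_not_mem_takeUntil hrest hvrest hne⟩
    · simp only [Walk.length_cons, Walk.length_reverse, Nat.odd_iff] at hodd ⊢
      omega
    · intro x hx
      rw [Walk.support_cons, List.mem_cons] at hx
      rcases hx with rfl | hx
      · exact Walk.start_mem_support _
      · have hx' := Walk.support_takeUntil_subset rest hvrest hx
        rw [Walk.support_cons]
        exact List.mem_cons_of_mem _ hx'
    · intro x hx
      rw [Walk.support_reverse, List.mem_reverse] at hx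
      have hx' := Walk.support_dropUntil_subset rest hvrest hx
      rw [Walk.support_cons]
      exact List.mem_cons_of_mem _ hx'

lemma goodSet_of_cycle [DecidableEq V] {w : V} {c : G.Walk w w} (hc : c.IsCycle)
    (hodd : Odd c.length) : GoodSet G {x | x ∈ c.support} := by
  intro u v hu hv huv
  have hu' : u ∈ c.support := hu
  have hcyc' : (c.rotate u hu').IsCycle := hc.rotate hu'
  have hlen' : (c.rotate u hu').length = c.length := length_rotate' c hu'
  have hmem : ∀ x, x ∈ (c.rotate u hu').support ↔ x ∈ c.support := by
    intro x
    constructor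
    · intro hx
      have h1 := mem_support_tail_of_closed hcyc'.ne_nil hx
      have h2 := ((Walk.support_rotate c u hu').perm.mem_iff).mp h1
      exact List.mem_of_mem_tail h2
    · intro hx
      have h1 := mem_support_tail_of_closed hc.ne_nil hx
      have h2 := ((Walk.support_rotate c u hu').perm.mem_iff).mpr h1
      exact List.mem_of_mem_tail h2
  have hv' : v ∈ (c.rotate u hu').support := (hmem v).mpr hv
  have hres := goodPair_of_cycle hcyc' (by rw [hlen']; exact hodd) hv' (Ne.symm huv)
  have hset : {x | x ∈ (c.rotate u hu').support} = {x | x ∈ c.support} :=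
    Set.ext fun x => hmem x
  rwa [hset] at hres

lemma goodSet_insert [DecidableEq V] {S : Set V} (hGood : GoodSet G S) {a b : V}
    (e : G.Walk a b) (he : e.IsPath) (hab : a ≠ b) (ha : a ∈ S) (hb : b ∈ S)
    (hint : ∀ x ∈ e.support, x ∈ S → x = a ∨ x = b) :
    GoodSet G (S ∪ {x | x ∈ e.support}) := by
  have hST : S ⊆ S ∪ {x | x ∈ e.support} := Set.subset_union_left
  have key : ∀ u, u ∈ e.support → u ∉ S → ∀ v ∈ S, v ≠ u →
      GoodPair G (S ∪ {x | x ∈ e.support}) u v := by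
    intro u hu huS v hv hvu
    have hua : u ≠ a := fun h => huS (h ▸ ha)
    have hub : u ≠ b := fun h => huS (h ▸ hb)
    by_cases hva : v = a
    · subst hva
      have hdpath : (e.dropUntil u hu).IsPath := he.dropUntil hu
      have hnotmem : v ∉ (e.dropUntil u hu).support := start_not_mem_dropUntil he hu hua
      have hbase : GoodPair G S b v := hGood b v hb ha (Ne.symm hab)
      have hd : ∀ x ∈ (e.dropUntil u hu).support, x ∈ S → x = b := by
        intro x hx hxS
        rcases hint x (Walk.support_dropUntil_subset e hu hx) hxS with rfl | rfl
        · exact absurd hx hnotmem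
        · rfl
      refine (goodPair_glue (e.dropUntil u hu) hdpath hd hbase).mono ?_
      refine Set.union_subset hST ?_
      intro x hx
      exact Or.inr (Walk.support_dropUntil_subset e hu hx)
    · have hbase : GoodPair G S a v := hGood a v ha hv (fun h => hva h.symm)
      have htpath : (e.takeUntil u hu).reverse.IsPath := (he.takeUntil hu).reverse
      have hbnotmem : b ∉ (e.takeUntil u hu).support := end_not_mem_takeUntil he hu hub
      have hd : ∀ x ∈ (e.takeUntil u hu).reverse.support, x ∈ S → x = a := by
        intro x hx hxS
        rw [Walk.support_reverse, List.mem_reverse] at hx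
        rcases hint x (Walk.support_takeUntil_subset e hu hx) hxS with rfl | rfl
        · rfl
        · exact absurd hx hbnotmem
      refine (goodPair_glue (e.takeUntil u hu).reverse htpath hd hbase).mono ?_
      refine Set.union_subset hST ?_
      intro x hx
      rw [Set.mem_setOf_eq, Walk.support_reverse, List.mem_reverse] at hx
      exact Or.inr (Walk.support_takeUntil_subset e hu hx)
  intro u v hu hv huv
  by_cases huS : u ∈ S
  · by_cases hvS : v ∈ S
    · exact (hGood u v huS hvS huv).mono hST
    · have hv' : v ∈ e.support := hv.resolve_left hvS
      exact (key v hv' hvS u huS huv).symm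
  · have hu' : u ∈ e.support := hu.resolve_left huS
    by_cases hvS : v ∈ S
    · exact key u hu' huS v hvS (Ne.symm huv)
    · -- both internal on the ear
      have hv' : v ∈ e.support := hv.resolve_left hvS
      have hua : u ≠ a := fun h => huS (h ▸ ha)
      have hub : u ≠ b := fun h => huS (h ▸ hb)
      have hvu : v ≠ u := Ne.symm huv
      have hsplit : v ∈ (e.takeUntil u hu').support ∨ v ∈ (e.dropUntil u hu').support := by
        have hm : v ∈ ((e.takeUntil u hu').append (e.dropUntil u hu')).support := by
          rw [Walk.take_spec]; exact hv'
        exact (Walk.mem_support_append_iff _ _).mp hm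
      have htpath : (e.takeUntil u hu').IsPath := he.takeUntil hu'
      have hdpath : (e.dropUntil u hu').IsPath := he.dropUntil hu'
      have hand : a ∉ (e.dropUntil u hu').support := start_not_mem_dropUntil he hu' hua
      have hbnt : b ∉ (e.takeUntil u hu').support := end_not_mem_takeUntil he hu' hub
      rcases hsplit with hvt | hvd
      · -- v on the a-side: u → b → a → v
        have hunt1 : u ∉ ((e.takeUntil u hu').takeUntil v hvt).support :=
          end_not_mem_takeUntil htpath hvt hvu
        have step1 : GoodPair G S b a := hGood b a hb ha (Ne.symm hab)
        have hd1 : ∀ x ∈ ((e.takeUntil u hu').takeUntil v hvt).support, x ∈ S → x = a := by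
          intro x hx hxS
          have hxe : x ∈ e.support := Walk.support_takeUntil_subset e hu'
            (Walk.support_takeUntil_subset _ hvt hx)
          rcases hint x hxe hxS with rfl | rfl
          · rfl
          · exact absurd (Walk.support_takeUntil_subset _ hvt hx) hbnt
        have step2 := goodPair_glue' ((e.takeUntil u hu').takeUntil v hvt)
          (htpath.takeUntil hvt) hd1 step1
        have hd2 : ∀ x ∈ (e.dropUntil u hu').support,
            x ∈ S ∪ {y | y ∈ ((e.takeUntil u hu').takeUntil v hvt).support} → x = b := by
          intro x hx hmem
          rcases hmem with hxS | hxt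
          · rcases hint x (Walk.support_dropUntil_subset e hu' hx) hxS with rfl | rfl
            · exact absurd hx hand
            · rfl
          · exfalso
            have hxt' : x ∈ (e.takeUntil u hu').support :=
              Walk.support_takeUntil_subset _ hvt hxt
            have := eq_of_mem_take_drop he hu' hxt' hx
            subst this
            exact hunt1 hxt
        have step3 := goodPair_glue (e.dropUntil u hu') hdpath hd2 step2
        refine step3.mono ?_
        intro x hx
        rcases hx with hx | hx
        · rcases hx with hx | hx
          · exact Or.inl hx
          · exact Or.inr (Walk.support_takeUntil_subset e hu'
              (Walk.support_takeUntil_subset _ hvt hx))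
        · exact Or.inr (Walk.support_dropUntil_subset e hu' hx)
      · -- v on the b-side: u → a → b → v
        have hund : u ∉ ((e.dropUntil u hu').dropUntil v hvd).support :=
          start_not_mem_dropUntil hdpath hvd hvu
        have step1 : GoodPair G S a b := hGood a b ha hb hab
        have hd1 : ∀ x ∈ ((e.dropUntil u hu').dropUntil v hvd).reverse.support,
            x ∈ S → x = b := by
          intro x hx hxS
          rw [Walk.support_reverse, List.mem_reverse] at hx
          have hxe : x ∈ e.support := Walk.support_dropUntil_subset e hu'
            (Walk.support_dropUntil_subset _ hvd hx)
          rcases hint x hxe hxS with rfl | rfl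
          · exact absurd (Walk.support_dropUntil_subset _ hvd hx) hand
          · rfl
        have step2 := goodPair_glue' ((e.dropUntil u hu').dropUntil v hvd).reverse
          ((hdpath.dropUntil hvd).reverse) hd1 step1
        have hd2 : ∀ x ∈ (e.takeUntil u hu').reverse.support,
            x ∈ S ∪ {y | y ∈ ((e.dropUntil u hu').dropUntil v hvd).reverse.support} →
            x = a := by
          intro x hx hmem
          rw [Walk.support_reverse, List.mem_reverse] at hx
          rcases hmem with hxS | hxd
          · rcases hint x (Walk.support_takeUntil_subset e hu' hx) hxS with rfl | rfl
            · rfl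
            · exact absurd hx hbnt
          · exfalso
            rw [Set.mem_setOf_eq, Walk.support_reverse, List.mem_reverse] at hxd
            have hxd' : x ∈ (e.dropUntil u hu').support :=
              Walk.support_dropUntil_subset _ hvd hxd
            have := eq_of_mem_take_drop he hu' hx hxd'
            subst this
            exact hund hxd
        have step3 := goodPair_glue (e.takeUntil u hu').reverse (htpath.reverse) hd2 step2
        refine step3.mono ?_
        intro x hx
        rcases hx with hx | hx
        · rcases hx with hx | hx
          · exact Or.inl hx
          · rw [Set.mem_setOf_eq, Walk.support_reverse, List.mem_reverse] at hx
            exact Or.inr (Walk.support_dropUntil_subset e hu'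
              (Walk.support_dropUntil_subset _ hvd hx))
        · rw [Set.mem_setOf_eq, Walk.support_reverse, List.mem_reverse] at hx
          exact Or.inr (Walk.support_takeUntil_subset e hu' hx)

lemma exists_ear (hconn : G.Connected)
    (hdel : ∀ w : V, ((⊤ : G.Subgraph).deleteVerts {w}).coe.Connected)
    {S : Set V} {s0 s1 : V} (hs0 : s0 ∈ S) (hs1 : s1 ∈ S) (hs01 : s0 ≠ s1)
    {v : V} (hv : v ∉ S) :
    ∃ (a b : V) (e : G.Walk a b), e.IsPath ∧ a ≠ b ∧ a ∈ S ∧ b ∈ S ∧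
      (∀ x ∈ e.support, x ∈ S → x = a ∨ x = b) ∧ ∃ w ∈ e.support, w ∉ S := by
  classical
  obtain ⟨W0⟩ := hconn.preconnected v s0
  obtain ⟨a, Q1w, haS, hfirst, _⟩ := exists_firstHit (G := G) (S := S) W0 hs0
  have hQ1path : Q1w.bypass.IsPath := Q1w.bypass_isPath
  have hQ1first : ∀ x ∈ Q1w.bypass.support, x ∈ S → x = a :=
    fun x hx => hfirst x (Walk.support_bypass_subset _ hx)
  have hva : v ≠ a := fun h => hv (h ▸ haS)
  -- pick s1' ∈ S with s1' ≠ a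
  obtain ⟨s1', hs1'S, hs1'a⟩ : ∃ s, s ∈ S ∧ s ≠ a := by
    by_cases h0a : s0 = a
    · exact ⟨s1, hs1, fun h => hs01 (h0a.trans h.symm)⟩
    · exact ⟨s0, hs0, h0a⟩
  have hnn : ¬ Q1w.bypass.reverse.Nil := Walk.not_nil_of_ne (Ne.symm hva)
  obtain ⟨w1, hadj, R', hrev⟩ := Walk.not_nil_iff.mp hnn
  · have hrp : (Walk.cons hadj R').IsPath := by rw [← hrev]; exact hQ1path.reverse
    rw [Walk.cons_isPath_iff] at hrp
    obtain ⟨hR'path, haR'⟩ := hrp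
    have hR'sub : ∀ x ∈ R'.support, x ∈ Q1w.bypass.support := by
      intro x hx
      have : x ∈ Q1w.bypass.reverse.support := by
        rw [hrev, Walk.support_cons]; exact List.mem_cons_of_mem _ hx
      rwa [Walk.support_reverse, List.mem_reverse] at this
    have hR'S : ∀ x ∈ R'.support, x ∉ S := by
      intro x hx hxS
      have := hQ1first x (hR'sub x hx) hxS
      subst this
      exact haR' hx
    -- path from v to S avoiding a, in G - a
    have hvmem : v ∈ ((⊤ : G.Subgraph).deleteVerts {a}).verts := by
      simp only [Subgraph.deleteVerts_verts, Subgraph.verts_top, Set.mem_diff,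
        Set.mem_univ, Set.mem_singleton_iff, true_and]
      exact hva
    have hs1'mem : s1' ∈ ((⊤ : G.Subgraph).deleteVerts {a}).verts := by
      simp only [Subgraph.deleteVerts_verts, Subgraph.verts_top, Set.mem_diff,
        Set.mem_univ, Set.mem_singleton_iff, true_and]
      exact hs1'a
    obtain ⟨Wk⟩ := (hdel a).preconnected ⟨v, hvmem⟩ ⟨s1', hs1'mem⟩
    let W2 : G.Walk v s1' := Wk.map ((⊤ : G.Subgraph).deleteVerts {a}).hom
    have hW2a : ∀ x ∈ W2.support, x ≠ a := by
      intro x hx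
      replace hx : x ∈ Wk.support.map ((⊤ : G.Subgraph).deleteVerts {a}).hom := by
        rw [← Walk.support_map]; exact hx
      rw [List.mem_map] at hx
      obtain ⟨y, _, rfl⟩ := hx
      have hy := y.2
      simp only [Subgraph.deleteVerts_verts, Subgraph.verts_top, Set.mem_diff,
        Set.mem_univ, Set.mem_singleton_iff, true_and] at hy
      exact hy
    obtain ⟨b, Q2, hbS, hQ2first, hQ2sub⟩ := exists_firstHit (G := G) (S := S) W2 hs1'S
    have hQ2a : a ∉ Q2.support := fun h => hW2a a (hQ2sub a h) rfl
    have hba : b ≠ a := fun h => hQ2a (h ▸ Walk.end_mem_support Q2)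
    -- assemble the ear
    let R : G.Walk w1 b := (R'.append Q2).bypass
    have hRpath : R.IsPath := Walk.bypass_isPath _
    have hRsub : ∀ x ∈ R.support, x ∈ R'.support ∨ x ∈ Q2.support := by
      intro x hx
      have := Walk.support_bypass_subset _ hx
      exact (Walk.mem_support_append_iff _ _).mp this
    have haR : a ∉ R.support := by
      intro h
      rcases hRsub a h with h' | h'
      · exact haR' h'
      · exact hQ2a h'
    have hRS : ∀ x ∈ R.support, x ∈ S → x = b := by
      intro x hx hxS
      rcases hRsub x hx with h' | h'
      · exact absurd hxS (hR'S x h')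
      · exact hQ2first x h' hxS
    refine ⟨a, b, Walk.cons hadj R, ?_, Ne.symm hba, haS, hbS, ?_, ?_⟩
    · rw [Walk.cons_isPath_iff]
      exact ⟨hRpath, haR⟩
    · intro x hx hxS
      rw [Walk.support_cons, List.mem_cons] at hx
      rcases hx with rfl | hx
      · exact Or.inl rfl
      · exact Or.inr (hRS x hx hxS)
    · refine ⟨w1, ?_, ?_⟩
      · rw [Walk.support_cons]
        exact List.mem_cons_of_mem _ (Walk.start_mem_support R)
      · intro hw1S
        exact hR'S w1 (Walk.start_mem_support R') hw1S

lemma goodSet_univ [Fintype V] (hconn : G.Connected)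
    (hdel : ∀ w : V, ((⊤ : G.Subgraph).deleteVerts {w}).coe.Connected) :
    ∀ (n : ℕ) (S : Set V), GoodSet G S →
      (∃ a b, a ∈ S ∧ b ∈ S ∧ a ≠ b) → (Sᶜ).ncard ≤ n → GoodSet G Set.univ := by
  intro n
  induction n with
  | zero =>
    intro S hGood _ hcard
    have hempty : Sᶜ = ∅ := by
      rw [Nat.le_zero] at hcard
      exact (Set.ncard_eq_zero (Set.toFinite _)).mp hcard
    have hSuniv : S = Set.univ := by rwa [Set.compl_empty_iff] at hempty
    rwa [hSuniv] at hGood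
  | succ n ih =>
    intro S hGood hpair hcard
    classical
    by_cases hS : Sᶜ = ∅
    · have hSuniv : S = Set.univ := by rwa [Set.compl_empty_iff] at hS
      rwa [hSuniv] at hGood
    · obtain ⟨v, hv⟩ := Set.nonempty_iff_ne_empty.mpr hS
      obtain ⟨s0, s1, hs0, hs1, hs01⟩ := hpair
      obtain ⟨a, b, e, he, hab, ha, hb, hint, w1, hw1e, hw1S⟩ :=
        exists_ear hconn hdel hs0 hs1 hs01 hv
      have hGood' := goodSet_insert hGood e he hab ha hb hint
      apply ih _ hGood' ⟨a, b, Or.inl ha, Or.inl hb, hab⟩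
      have hsub1 : (S ∪ {x | x ∈ e.support})ᶜ ⊆ Sᶜ :=
        Set.compl_subset_compl.mpr Set.subset_union_left
      have hw1T : w1 ∈ S ∪ {x | x ∈ e.support} := Or.inr hw1e
      have hssub : (S ∪ {x | x ∈ e.support})ᶜ ⊂ Sᶜ := by
        refine hsub1.ssubset_of_ne ?_
        intro h
        have hw1c : w1 ∈ (S ∪ {x | x ∈ e.support})ᶜ := by rw [h]; exact hw1S
        exact hw1c hw1T
      have hlt := Set.ncard_lt_ncard hssub (Set.toFinite _)
      omega

end Stmt12Aux

/-- in a 2-connected non-bipartite graph there exist both an odd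
and an even path between any two distinct vertices. -/
theorem stmt12 {V : Type*} [Fintype V] (G : SimpleGraph V)
    (hG : TwoConnected G) (hnb : HasOddCircuit G) (u v : V) (huv : u ≠ v) :
    (∃ p : G.Walk u v, p.IsPath ∧ Odd p.length) ∧
    (∃ p : G.Walk u v, p.IsPath ∧ Even p.length) := by
  classical
  obtain ⟨w, c, hc, hodd⟩ := hnb
  obtain ⟨hconn, _, hdel⟩ := hG
  have hbase : GoodSet G {x | x ∈ c.support} := goodSet_of_cycle hc hodd
  have hpair : ∃ a b, a ∈ {x | x ∈ c.support} ∧ b ∈ {x | x ∈ c.support} ∧ a ≠ b := by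
    cases c with
    | nil => exact absurd rfl hc.ne_nil
    | cons hadj rest =>
      refine ⟨w, _, Walk.start_mem_support _, ?_, hadj.ne⟩
      rw [Set.mem_setOf_eq, Walk.support_cons]
      exact List.mem_cons_of_mem _ (Walk.start_mem_support rest)
  have huniv := goodSet_univ hconn hdel (({x | x ∈ c.support})ᶜ).ncard _ hbase hpair le_rfl
  obtain ⟨p, q, hp, hq, hl, -, -⟩ := huniv u v trivial trivial huv
  have hcases : (Odd p.length ∧ Even q.length) ∨ (Even p.length ∧ Odd q.length) := by
    rw [Nat.odd_iff] at hl
    rcases Nat.even_or_odd p.length with h | h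
    · right
      refine ⟨h, ?_⟩
      rw [Nat.even_iff] at h
      rw [Nat.odd_iff]
      omega
    · left
      refine ⟨h, ?_⟩
      rw [Nat.odd_iff] at h
      rw [Nat.even_iff]
      omega
  rcases hcases with ⟨h1, h2⟩ | ⟨h1, h2⟩
  · exact ⟨⟨p, hp, h1⟩, ⟨q, hq, h2⟩⟩
  · exact ⟨⟨q, hq, h2⟩, ⟨p, hp, h1⟩⟩
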